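/- Let U ⊂ ℂⁿ be open, r : U → ℝ of class C², and ζ₀ ∈ U a point at which the Levi form of r is positive definite, i.e. there is c > 0 such that D²r(ζ₀)(w,w) + D²r(ζ₀)(iw,iw) ≥ c|w|² for all w ∈ ℂⁿ. Define the Levi polynomial F(ζ,z) = Σ_{j=1}^n (∂r/∂ζ_j)(ζ)·(ζ_j − z_j) − (1/2) Σ_{j,k=1}^n (∂²r/∂ζ_j∂ζ_k)(ζ)·(ζ_j − z_j)(ζ_k − z_k). Then there exist ε > 0 and c' > 0 such that for all ζ, z with |ζ − ζ₀| < ε and |z − ζ₀| < ε one has 2 Re F(ζ,z) ≥ r(ζ) − r(z) + c' |ζ − z|². -/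

import Mathlib

open Finset

/-- The holomorphic Wirtinger derivative `∂g/∂ζ_j = (1/2)(∂g/∂x_j − i ∂g/∂y_j)` of a
complex-valued function, computed within the open set `U` (here `ζ_j = x_j + i y_j`). -/
noncomputable def wirtinger {n : ℕ} (U : Set (EuclideanSpace ℂ (Fin n)))
    (g : EuclideanSpace ℂ (Fin n) → ℂ) (j : Fin n) (ζ : EuclideanSpace ℂ (Fin n)) : ℂ :=
  (1 / 2 : ℂ) * (fderivWithin ℝ g U ζ (EuclideanSpace.single j 1)
    - Complex.I * fderivWithin ℝ g U ζ (EuclideanSpace.single j Complex.I))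

/-- The Levi polynomial of a real-valued function `r` (derivatives taken within `U`):
`F(ζ,z) = Σ_j ∂r/∂ζ_j(ζ)(ζ_j − z_j) − (1/2) Σ_{j,k} ∂²r/∂ζ_j∂ζ_k(ζ)(ζ_j − z_j)(ζ_k − z_k)`. -/
noncomputable def leviPolynomial {n : ℕ} (U : Set (EuclideanSpace ℂ (Fin n)))
    (r : EuclideanSpace ℂ (Fin n) → ℝ)
    (ζ z : EuclideanSpace ℂ (Fin n)) : ℂ :=
  ∑ j : Fin n, wirtinger U (fun w => (r w : ℂ)) j ζ * (ζ j - z j)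
    - (1 / 2 : ℂ) * ∑ j : Fin n, ∑ k : Fin n,
        wirtinger U (wirtinger U (fun w => (r w : ℂ)) j) k ζ * (ζ j - z j) * (ζ k - z k)

/-- If `r` is `C²` on an open set `U ⊆ ℂⁿ` and its Levi form is positive
definite at `ζ₀ ∈ U`, then there are `ε > 0` and `c' > 0` such that the Levi polynomial
`F` of `r` satisfies `2 Re F(ζ,z) ≥ r(ζ) − r(z) + c'|ζ − z|²` for all `ζ, z` in the
`ε`-ball around `ζ₀`. -/
lemma single_decomp {n : ℕ} (c : ℂ) (j : Fin n) :
    c • EuclideanSpace.single j (1:ℂ)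
      = c.re • EuclideanSpace.single j (1:ℂ) + c.im • EuclideanSpace.single j Complex.I := by
  ext i
  simp only [PiLp.add_apply, PiLp.smul_apply, EuclideanSpace.single_apply, smul_eq_mul,
    Complex.real_smul]
  split_ifs <;> simp [Complex.ext_iff]

lemma basis_decomp {n : ℕ} (w : EuclideanSpace ℂ (Fin n)) :
    w = ∑ j : Fin n, (w j) • EuclideanSpace.single j (1:ℂ) := by
  ext i
  rw [WithLp.ofLp_sum, Finset.sum_apply]
  simp [EuclideanSpace.single_apply]

variable {n : ℕ} {U : Set (EuclideanSpace ℂ (Fin n))} {r : EuclideanSpace ℂ (Fin n) → ℝ}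
lemma wirt1 (hU : IsOpen U) (hr : ContDiffOn ℝ 2 r U) {ζ} (hζ : ζ ∈ U) (j : Fin n) :
    wirtinger U (fun w => (r w : ℂ)) j ζ =
      (1 / 2 : ℂ) * ((fderivWithin ℝ r U ζ (EuclideanSpace.single j 1) : ℂ)
        - Complex.I * (fderivWithin ℝ r U ζ (EuclideanSpace.single j Complex.I) : ℂ)) := by
  have hd : DifferentiableWithinAt ℝ r U ζ :=
    (hr.differentiableOn two_ne_zero) ζ hζ
  have hF : HasFDerivWithinAt (fun w => (r w : ℂ))
      (Complex.ofRealCLM.comp (fderivWithin ℝ r U ζ)) U ζ :=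
    Complex.ofRealCLM.hasFDerivAt.comp_hasFDerivWithinAt ζ hd.hasFDerivWithinAt
  have hcomp := hF.fderivWithin (hU.uniqueDiffOn ζ hζ)
  rw [wirtinger, hcomp]
  simp

-- derivative of ζ ↦ (r' ζ u : ℂ)
lemma hasFDeriv_dr (hU : IsOpen U) (hr : ContDiffOn ℝ 2 r U) {ζ} (hζ : ζ ∈ U)
    (u : EuclideanSpace ℂ (Fin n)) :
    HasFDerivWithinAt (fun x => ((fderivWithin ℝ r U x u : ℝ) : ℂ))
      (Complex.ofRealCLM.comp ((ContinuousLinearMap.apply ℝ ℝ u).comp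
        (fderivWithin ℝ (fderivWithin ℝ r U) U ζ))) U ζ := by
  have hφd : DifferentiableOn ℝ (fderivWithin ℝ r U) U :=
    (hr.fderivWithin (m := 1) hU.uniqueDiffOn (by norm_num)).differentiableOn one_ne_zero
  have h1 : HasFDerivWithinAt (fderivWithin ℝ r U)
      (fderivWithin ℝ (fderivWithin ℝ r U) U ζ) U ζ :=
    (hφd ζ hζ).hasFDerivWithinAt
  have h2 := (ContinuousLinearMap.apply ℝ ℝ u).hasFDerivAt.comp_hasFDerivWithinAt ζ h1
  exact Complex.ofRealCLM.hasFDerivAt.comp_hasFDerivWithinAt ζ h2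

lemma wirt2 (hU : IsOpen U) (hr : ContDiffOn ℝ 2 r U) {ζ} (hζ : ζ ∈ U) (j k : Fin n) :
    wirtinger U (wirtinger U (fun w => (r w : ℂ)) j) k ζ =
      (1 / 4 : ℂ) * (
        ((fderivWithin ℝ (fderivWithin ℝ r U) U ζ (EuclideanSpace.single k 1)
            (EuclideanSpace.single j 1) : ℝ) : ℂ)
        - Complex.I * ((fderivWithin ℝ (fderivWithin ℝ r U) U ζ (EuclideanSpace.single k 1)
            (EuclideanSpace.single j Complex.I) : ℝ) : ℂ)
        - Complex.I * ((fderivWithin ℝ (fderivWithin ℝ r U) U ζ (EuclideanSpace.single k Complex.I)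
            (EuclideanSpace.single j 1) : ℝ) : ℂ)
        - ((fderivWithin ℝ (fderivWithin ℝ r U) U ζ (EuclideanSpace.single k Complex.I)
            (EuclideanSpace.single j Complex.I) : ℝ) : ℂ)) := by
  set B := fderivWithin ℝ (fderivWithin ℝ r U) U with hB
  have hψ : HasFDerivWithinAt
      (fun x => (1/2 : ℂ) * (((fderivWithin ℝ r U x (EuclideanSpace.single j 1) : ℝ) : ℂ)
        - Complex.I * ((fderivWithin ℝ r U x (EuclideanSpace.single j Complex.I) : ℝ) : ℂ)))
      ((1/2 : ℂ) • ((Complex.ofRealCLM.comp ((ContinuousLinearMap.apply ℝ ℝ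
          (EuclideanSpace.single j 1)).comp (B ζ)))
        - Complex.I • (Complex.ofRealCLM.comp ((ContinuousLinearMap.apply ℝ ℝ
          (EuclideanSpace.single j Complex.I)).comp (B ζ))))) U ζ :=
    (((hasFDeriv_dr hU hr hζ _).sub ((hasFDeriv_dr hU hr hζ _).const_mul Complex.I)).const_mul
      ((1:ℂ)/2))
  have hw : HasFDerivWithinAt (wirtinger U (fun w => (r w : ℂ)) j)
      ((1/2 : ℂ) • ((Complex.ofRealCLM.comp ((ContinuousLinearMap.apply ℝ ℝ
          (EuclideanSpace.single j 1)).comp (B ζ)))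
        - Complex.I • (Complex.ofRealCLM.comp ((ContinuousLinearMap.apply ℝ ℝ
          (EuclideanSpace.single j Complex.I)).comp (B ζ))))) U ζ :=
    hψ.congr (fun x hx => wirt1 hU hr hx j) (wirt1 hU hr hζ j)
  rw [wirtinger, hw.fderivWithin (hU.uniqueDiffOn ζ hζ)]
  simp only [ContinuousLinearMap.smul_apply, ContinuousLinearMap.sub_apply,
    ContinuousLinearMap.comp_apply, ContinuousLinearMap.apply_apply,
    Complex.ofRealCLM_apply, smul_eq_mul]
  ring_nf
  rw [Complex.I_sq]
  ring

lemma levi_eq (hU : IsOpen U) (hr : ContDiffOn ℝ 2 r U) {ζ z : EuclideanSpace ℂ (Fin n)}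
    (hζ : ζ ∈ U) :
    2 * (leviPolynomial U r ζ z).re
      = fderivWithin ℝ r U ζ (ζ - z)
        - (1/4) * (fderivWithin ℝ (fderivWithin ℝ r U) U ζ (ζ - z) (ζ - z)
          - fderivWithin ℝ (fderivWithin ℝ r U) U ζ (Complex.I • (ζ - z)) (Complex.I • (ζ - z))) := by
  set w : EuclideanSpace ℂ (Fin n) := ζ - z with hwdef
  set r' := fderivWithin ℝ r U with hr'
  set B := fderivWithin ℝ (fderivWithin ℝ r U) U with hB
  set u : Fin n → EuclideanSpace ℂ (Fin n) := fun j => (w j) • EuclideanSpace.single j (1:ℂ)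
    with hu
  have hwj : ∀ j, ζ j - z j = w j := fun j => rfl
  have hIuj : ∀ j, Complex.I • u j = ((Complex.I • w) j) • EuclideanSpace.single j (1:ℂ) := by
    intro j; rw [hu, smul_smul]; rfl
  -- term 1
  have term1 : ∀ j, 2 * (wirtinger U (fun w => (r w : ℂ)) j ζ * (ζ j - z j)).re
      = r' ζ (u j) := by
    intro j
    rw [wirt1 hU hr hζ, hwj, show u j = (w j) • EuclideanSpace.single j (1:ℂ) from rfl,
      single_decomp, map_add, map_smul, map_smul]
    simp only [smul_eq_mul, Complex.mul_re, Complex.sub_re, Complex.sub_im, Complex.mul_im,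
      Complex.ofReal_re, Complex.ofReal_im, Complex.I_re, Complex.I_im, Complex.div_re,
      Complex.one_re, Complex.one_im, Complex.normSq_ofNat]
    norm_num
    ring
  -- term 2
  have term2 : ∀ j k, (wirtinger U (wirtinger U (fun w => (r w : ℂ)) j) k ζ
        * (ζ j - z j) * (ζ k - z k)).re
      = (1/4) * (B ζ (u k) (u j) - B ζ (Complex.I • u k) (Complex.I • u j)) := by
    intro j k
    rw [wirt2 hU hr hζ, hwj, hwj]
    have exp1 : B ζ (u k) (u j)
        = (w k).re * ((w j).re * B ζ (EuclideanSpace.single k 1) (EuclideanSpace.single j 1)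
            + (w j).im * B ζ (EuclideanSpace.single k 1) (EuclideanSpace.single j Complex.I))
          + (w k).im * ((w j).re * B ζ (EuclideanSpace.single k Complex.I) (EuclideanSpace.single j 1)
            + (w j).im * B ζ (EuclideanSpace.single k Complex.I) (EuclideanSpace.single j Complex.I)) := by
      rw [show u k = (w k) • EuclideanSpace.single k (1:ℂ) from rfl,
        show u j = (w j) • EuclideanSpace.single j (1:ℂ) from rfl,
        single_decomp (w k), single_decomp (w j), map_add, map_smul, map_smul]
      simp [map_add, map_smul, smul_eq_mul, mul_add]
      ring
    have exp2 : B ζ (Complex.I • u k) (Complex.I • u j)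
        = (-(w k).im) * ((-(w j).im) * B ζ (EuclideanSpace.single k 1) (EuclideanSpace.single j 1)
            + (w j).re * B ζ (EuclideanSpace.single k 1) (EuclideanSpace.single j Complex.I))
          + (w k).re * ((-(w j).im) * B ζ (EuclideanSpace.single k Complex.I) (EuclideanSpace.single j 1)
            + (w j).re * B ζ (EuclideanSpace.single k Complex.I) (EuclideanSpace.single j Complex.I)) := by
      rw [hIuj, hIuj, single_decomp ((Complex.I • w) k), single_decomp ((Complex.I • w) j)]
      have hre : ∀ (v : EuclideanSpace ℂ (Fin n)) (i : Fin n),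
          ((Complex.I • v) i).re = -(v i).im := by
        intro v i
        have : (Complex.I • v) i = Complex.I * v i := rfl
        rw [this]; simp
      have him : ∀ (v : EuclideanSpace ℂ (Fin n)) (i : Fin n),
          ((Complex.I • v) i).im = (v i).re := by
        intro v i
        have : (Complex.I • v) i = Complex.I * v i := rfl
        rw [this]; simp
      rw [hre, him, hre, him, map_add, map_smul, map_smul]
      simp [map_add, map_smul, smul_eq_mul, mul_add]
      ring
    rw [exp1, exp2]
    simp only [Complex.mul_re, Complex.mul_im, Complex.sub_re, Complex.sub_im,
      Complex.ofReal_re, Complex.ofReal_im, Complex.I_re, Complex.I_im, Complex.div_re,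
      Complex.div_im, Complex.one_re, Complex.one_im, Complex.normSq_ofNat]
    norm_num
    ring
  -- assemble
  have sum_u : ∑ j : Fin n, u j = w := (basis_decomp w).symm
  have sum_Iu : ∑ j : Fin n, Complex.I • u j = Complex.I • w := by
    rw [← Finset.smul_sum, sum_u]
  rw [leviPolynomial]
  rw [Complex.sub_re]
  rw [Complex.re_sum]
  have hhalf : ((1 / 2 : ℂ) * ∑ j : Fin n, ∑ k : Fin n,
      wirtinger U (wirtinger U (fun w => (r w : ℂ)) j) k ζ * (ζ j - z j) * (ζ k - z k)).re
      = (1/2) * ∑ j : Fin n, ∑ k : Fin n, (wirtinger U (wirtinger U (fun w => (r w : ℂ)) j) k ζ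
          * (ζ j - z j) * (ζ k - z k)).re := by
    rw [Complex.mul_re]
    rw [Complex.re_sum, Complex.im_sum]
    norm_num
  rw [hhalf]
  rw [mul_sub, Finset.mul_sum]
  have e1 : ∑ j : Fin n, 2 * (wirtinger U (fun w => (r w : ℂ)) j ζ * (ζ j - z j)).re
      = r' ζ w := by
    rw [Finset.sum_congr rfl (fun j _ => term1 j), ← map_sum, sum_u]
  have e2 : ∑ j : Fin n, ∑ k : Fin n, (wirtinger U (wirtinger U (fun w => (r w : ℂ)) j) k ζ
        * (ζ j - z j) * (ζ k - z k)).re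
      = (1/4) * (B ζ w w - B ζ (Complex.I • w) (Complex.I • w)) := by
    have inner : ∀ j, ∑ k : Fin n, (wirtinger U (wirtinger U (fun w => (r w : ℂ)) j) k ζ
          * (ζ j - z j) * (ζ k - z k)).re
        = (1/4) * (B ζ w (u j) - B ζ (Complex.I • w) (Complex.I • u j)) := by
      intro j
      rw [Finset.sum_congr rfl (fun k _ => term2 j k)]
      rw [← Finset.mul_sum, Finset.sum_sub_distrib]
      congr 2
      · rw [← ContinuousLinearMap.sum_apply, ← map_sum, sum_u]
      · rw [← ContinuousLinearMap.sum_apply, ← map_sum, sum_Iu]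
    rw [Finset.sum_congr rfl (fun j _ => inner j)]
    rw [← Finset.mul_sum, Finset.sum_sub_distrib, ← map_sum, ← map_sum, sum_u, sum_Iu]
  rw [e2, e1]
  ring
lemma norm_sub_le_segment {E : Type*} [NormedAddCommGroup E] [NormedSpace ℝ E]
    {ζ z x : E} (h : x ∈ segment ℝ ζ z) : ‖x - ζ‖ ≤ ‖z - ζ‖ := by
  obtain ⟨a, b, ha, hb, hab, rfl⟩ := h
  have h1 : a = 1 - b := by linarith
  have : a • ζ + b • z - ζ = b • (z - ζ) := by
    rw [h1, smul_sub, sub_smul, one_smul]; abel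
  rw [this, norm_smul]
  have hb1 : b ≤ 1 := by linarith
  calc ‖b‖ * ‖z - ζ‖ ≤ 1 * ‖z - ζ‖ := by
        apply mul_le_mul_of_nonneg_right _ (norm_nonneg _)
        rwa [Real.norm_eq_abs, abs_of_nonneg hb]
    _ = ‖z - ζ‖ := one_mul _

lemma taylor_two_bound {E : Type*} [NormedAddCommGroup E] [NormedSpace ℝ E]
    {U s : Set E} (hU : IsOpen U) {r : E → ℝ} (hr : ContDiffOn ℝ 2 r U)
    (hs : Convex ℝ s) (hsU : s ⊆ U) {ζ z : E} (hζ : ζ ∈ s) (hz : z ∈ s)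
    (hsymm : ∀ v u, fderivWithin ℝ (fderivWithin ℝ r U) U ζ v u
      = fderivWithin ℝ (fderivWithin ℝ r U) U ζ u v)
    {K : ℝ}
    (hK : ∀ ξ ∈ s, ‖fderivWithin ℝ (fderivWithin ℝ r U) U ξ
      - fderivWithin ℝ (fderivWithin ℝ r U) U ζ‖ ≤ K) :
    |r z - r ζ - fderivWithin ℝ r U ζ (z - ζ)
      - (1/2) * fderivWithin ℝ (fderivWithin ℝ r U) U ζ (z - ζ) (z - ζ)| ≤ K * ‖z - ζ‖ ^ 2 := by
  set r' := fderivWithin ℝ r U with hr'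
  set B := fderivWithin ℝ (fderivWithin ℝ r U) U with hB
  have hrd : DifferentiableOn ℝ r U := hr.differentiableOn two_ne_zero
  have hφ : ContDiffOn ℝ 1 r' U := hr.fderivWithin hU.uniqueDiffOn (by norm_num)
  have hφd : DifferentiableOn ℝ r' U := hφ.differentiableOn one_ne_zero
  set B₀ := B ζ with hB₀
  -- Step 1 : mean value for the first derivative
  have step1 : ∀ x ∈ s, ‖r' x - r' ζ - B₀ (x - ζ)‖ ≤ K * ‖x - ζ‖ := by
    intro x hx
    have key := Convex.norm_image_sub_le_of_norm_hasFDerivWithin_le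
      (f := fun y => r' y - B₀ y) (f' := fun y => B y - B₀) (s := s) (x := ζ) (y := x)
      (fun y hy => (((hφd y (hsU hy)).hasFDerivWithinAt.mono hsU).sub
        (B₀.hasFDerivWithinAt))) (fun y hy => by
          simpa using hK y hy) hs hζ hx
    have : r' x - B₀ x - (r' ζ - B₀ ζ) = r' x - r' ζ - B₀ (x - ζ) := by
      rw [map_sub]; abel
    rwa [this] at key
  -- Step 2 : mean value for the Taylor remainder along the segment
  set σ := segment ℝ ζ z with hσ
  have hσs : σ ⊆ s := hs.segment_subset hζ hz
  set g := fun x => r x - r' ζ (x - ζ) - (1/2) * B₀ (x - ζ) (x - ζ) with hg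
  have key2 := Convex.norm_image_sub_le_of_norm_hasFDerivWithin_le
    (f := g) (f' := fun x => r' x - r' ζ - B₀ (x - ζ)) (s := σ) (x := ζ) (y := z)
    (fun x hx => by
      have h1 : HasFDerivWithinAt r (r' x) σ x :=
        (hrd x (hsU (hσs hx))).hasFDerivWithinAt.mono (hσs.trans hsU)
      have h2 : HasFDerivWithinAt (fun y => r' ζ (y - ζ)) (r' ζ) σ x := by
        have fun_eq : (fun y => r' ζ (y - ζ)) = fun y => r' ζ y - r' ζ ζ := by
          funext y; rw [map_sub]
        rw [fun_eq]
        exact (((r' ζ).hasFDerivAt).sub_const _).hasFDerivWithinAt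
      have h3 : HasFDerivWithinAt (fun y => B₀ (y - ζ) (y - ζ))
          ((B₀.isBoundedBilinearMap.deriv (x - ζ, x - ζ)).comp
            ((ContinuousLinearMap.id ℝ E).prod (ContinuousLinearMap.id ℝ E))) σ x := by
        have hm : HasFDerivAt (fun y => (y - ζ, y - ζ))
            ((ContinuousLinearMap.id ℝ E).prod (ContinuousLinearMap.id ℝ E)) x :=
          HasFDerivAt.prodMk ((hasFDerivAt_id x).sub_const ζ) ((hasFDerivAt_id x).sub_const ζ)
        exact ((B₀.isBoundedBilinearMap.hasFDerivAt (x - ζ, x - ζ)).comp x hm).hasFDerivWithinAt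
      have h4 := (h1.sub h2).sub ((h3.const_mul ((1:ℝ)/2)))
      convert h4 using 1
      · rfl
      ext v
      simp [IsBoundedBilinearMap.deriv_apply, hsymm v (x - ζ), map_sub]
      ring)
    (fun x hx => by
      calc ‖r' x - r' ζ - B₀ (x - ζ)‖ ≤ K * ‖x - ζ‖ := step1 x (hσs hx)
        _ ≤ K * ‖z - ζ‖ := by
            have hK0 : 0 ≤ K := le_trans (norm_nonneg (B ζ - B₀)) (hK ζ hζ)
            exact mul_le_mul_of_nonneg_left (norm_sub_le_segment hx) hK0)
    (convex_segment ζ z) (left_mem_segment ℝ ζ z) (right_mem_segment ℝ ζ z)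
  have gζ : g ζ = r ζ := by simp [hg]
  have : g z - g ζ = r z - r ζ - r' ζ (z - ζ) - (1/2) * B₀ (z - ζ) (z - ζ) := by
    rw [gζ, hg]; ring
  rw [this] at key2
  calc |r z - r ζ - r' ζ (z - ζ) - (1/2) * B₀ (z - ζ) (z - ζ)|
      = ‖r z - r ζ - r' ζ (z - ζ) - (1/2) * B₀ (z - ζ) (z - ζ)‖ := (Real.norm_eq_abs _).symm
    _ ≤ K * ‖z - ζ‖ * ‖z - ζ‖ := key2
    _ = K * ‖z - ζ‖ ^ 2 := by ring


set_option maxHeartbeats 1000000 in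
theorem leviPolynomial_re_lower_bound
    (n : ℕ)
    (U : Set (EuclideanSpace ℂ (Fin n))) (hU : IsOpen U)
    (r : EuclideanSpace ℂ (Fin n) → ℝ) (hr : ContDiffOn ℝ 2 r U)
    (ζ₀ : EuclideanSpace ℂ (Fin n)) (hζ₀ : ζ₀ ∈ U)
    -- positive definiteness of the Levi form of `r` at `ζ₀`
    (c : ℝ) (hc : 0 < c)
    (hLevi : ∀ w : EuclideanSpace ℂ (Fin n),
      c * ‖w‖ ^ 2 ≤ iteratedFDerivWithin ℝ 2 r U ζ₀ ![w, w]
        + iteratedFDerivWithin ℝ 2 r U ζ₀ ![Complex.I • w, Complex.I • w]) :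
    ∃ ε : ℝ, 0 < ε ∧ Metric.ball ζ₀ ε ⊆ U ∧ ∃ c' : ℝ, 0 < c' ∧
      ∀ ζ z : EuclideanSpace ℂ (Fin n), ‖ζ - ζ₀‖ < ε → ‖z - ζ₀‖ < ε →
        r ζ - r z + c' * ‖ζ - z‖ ^ 2 ≤ 2 * (leviPolynomial U r ζ z).re := by
  set r' := fderivWithin ℝ r U with hr'def
  set B := fderivWithin ℝ (fderivWithin ℝ r U) U with hBdef
  -- continuity of the second derivative
  have hφ : ContDiffOn ℝ 1 (fderivWithin ℝ r U) U := hr.fderivWithin hU.uniqueDiffOn (by norm_num)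
  have hBc : ContinuousOn B U := hφ.continuousOn_fderivWithin hU.uniqueDiffOn le_rfl
  have hcont : ContinuousWithinAt B U ζ₀ := hBc ζ₀ hζ₀
  replace hcont := (Metric.continuousWithinAt_iff (α := EuclideanSpace ℂ (Fin n))
    (β := EuclideanSpace ℂ (Fin n) →L[ℝ] EuclideanSpace ℂ (Fin n) →L[ℝ] ℝ)).1 hcont
  obtain ⟨δ, hδ, hδ'⟩ := hcont (c/32) (by positivity)
  obtain ⟨ε₀, hε₀, hball₀⟩ := Metric.isOpen_iff.1 hU ζ₀ hζ₀
  refine ⟨min δ ε₀, lt_min hδ hε₀, (Metric.ball_subset_ball (min_le_right _ _)).trans hball₀,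
    c/8, by positivity, ?_⟩
  intro ζ z hζε hzε
  set ε := min δ ε₀
  have hballU : Metric.ball ζ₀ ε ⊆ U :=
    (Metric.ball_subset_ball (min_le_right _ _)).trans hball₀
  have hζb : ζ ∈ Metric.ball ζ₀ ε := by rwa [Metric.mem_ball, dist_eq_norm]
  have hzb : z ∈ Metric.ball ζ₀ ε := by rwa [Metric.mem_ball, dist_eq_norm]
  have hζU : ζ ∈ U := hballU hζb
  have hzU : z ∈ U := hballU hzb
  -- bound on B near ζ₀
  have hB0 : ∀ ξ ∈ Metric.ball ζ₀ ε, ‖B ξ - B ζ₀‖ ≤ c/32 := by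
    intro ξ hξ
    have h1 : dist ξ ζ₀ < δ := lt_of_lt_of_le (Metric.mem_ball.1 hξ) (min_le_left _ _)
    have := hδ' (hballU hξ) h1
    rw [dist_eq_norm (B ξ) (B ζ₀)] at this
    exact this.le
  have hK : ∀ ξ ∈ Metric.ball ζ₀ ε, ‖B ξ - B ζ‖ ≤ c/16 := by
    intro ξ hξ
    have h1 := hB0 ξ hξ
    have h2 := hB0 ζ hζb
    calc ‖B ξ - B ζ‖ = ‖(B ξ - B ζ₀) - (B ζ - B ζ₀)‖ := by abel_nf
      _ ≤ ‖B ξ - B ζ₀‖ + ‖B ζ - B ζ₀‖ := norm_sub_le (B ξ - B ζ₀) (B ζ - B ζ₀)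
      _ ≤ c/32 + c/32 := add_le_add h1 h2
      _ = c/16 := by ring
  -- symmetry of the second derivative at ζ
  have hsymm : ∀ v u, B ζ v u = B ζ u v := by
    have := (hr ζ hζU).isSymmSndFDerivWithinAt (by simp) hU.uniqueDiffOn
      (by rw [hU.interior_eq]; exact subset_closure hζU) hζU
    exact fun v u => this v u
  -- Taylor estimate
  have taylor := taylor_two_bound hU hr (convex_ball ζ₀ ε) hballU hζb hzb hsymm hK
  rw [← hr'def, ← hBdef] at taylor
  -- the identity for the Levi polynomial
  have hid := levi_eq hU hr (z := z) hζU
  rw [← hr'def, ← hBdef] at hid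
  set w : EuclideanSpace ℂ (Fin n) := ζ - z with hw
  -- positivity of the Levi form at ζ₀
  have hlv : c * ‖w‖^2 ≤ B ζ₀ w w + B ζ₀ (Complex.I • w) (Complex.I • w) := by
    have := hLevi w
    rw [iteratedFDerivWithin_two_apply _ hU.uniqueDiffOn hζ₀,
      iteratedFDerivWithin_two_apply _ hU.uniqueDiffOn hζ₀] at this
    simpa using this
  -- comparison of B ζ with B ζ₀
  have hcmp : ∀ v : EuclideanSpace ℂ (Fin n),
      |B ζ v v - B ζ₀ v v| ≤ (c/32) * (‖v‖ * ‖v‖) := by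
    intro v
    have h1 : B ζ v v - B ζ₀ v v = ((B ζ - B ζ₀) v) v := by simp
    rw [h1, ← Real.norm_eq_abs]
    calc ‖((B ζ - B ζ₀) v) v‖ ≤ ‖B ζ - B ζ₀‖ * ‖v‖ * ‖v‖ :=
          (B ζ - B ζ₀).le_opNorm₂ v v
      _ ≤ (c/32) * (‖v‖ * ‖v‖) := by
          rw [mul_assoc]
          exact mul_le_mul_of_nonneg_right (hB0 ζ hζb) (by positivity)
  have hIw : ‖Complex.I • w‖ = ‖w‖ := by rw [norm_smul]; simp
  have hc1 := hcmp w
  have hc2 := hcmp (Complex.I • w)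
  rw [hIw] at hc2
  -- rewrite Taylor in terms of w
  have hneg : z - ζ = -w := by rw [hw]; abel
  have e1 : r' ζ (z - ζ) = - r' ζ w := by rw [hneg, map_neg]
  have e2 : B ζ (z - ζ) (z - ζ) = B ζ w w := by
    rw [hneg]
    simp only [map_neg, ContinuousLinearMap.neg_apply, neg_neg]
  have e3 : ‖z - ζ‖ = ‖w‖ := by rw [hneg, norm_neg]
  rw [e1, e2, e3] at taylor
  have taylor' := abs_le.1 taylor
  have hwsq : ‖w‖^2 = ‖w‖ * ‖w‖ := sq ‖w‖
  have hc1' := (abs_le.1 hc1).1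
  have hc2' := (abs_le.1 hc2).1
  rw [← hwsq] at hc1' hc2'
  rw [hid]
  have hX : (0:ℝ) ≤ ‖w‖^2 := sq_nonneg _
  have hgoal : ‖ζ - z‖ = ‖w‖ := rfl
  rw [hgoal]
  linarith [taylor'.1, hc1', hc2', hlv, mul_nonneg hc.le hX]
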